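/- Let G be a finite simple Hamiltonian graph on an odd number k of vertices that is not isomorphic to the cycle C_k. Then the Cartesian product G □ K₂ is not Hamiltonian-transitive. -/

import Mathlib

set_option linter.unusedSectionVars false
set_option maxHeartbeats 1000000


open SimpleGraph

/-- `G` contains a Hamiltonian cycle. -/
def HasHamCycle {V : Type*} [DecidableEq V] (G : SimpleGraph V) : Prop :=
  ∃ (v : V) (c : G.Walk v v), c.IsHamiltonianCycle

/-- `G` is Hamiltonian-transitive: it has a Hamiltonian cycle, and any Hamiltonian cycle
can be mapped to any other by a graph automorphism (acting on edge sets). -/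
def IsHamTransitive {V : Type*} [DecidableEq V] (G : SimpleGraph V) : Prop :=
  HasHamCycle G ∧
  ∀ ⦃u v : V⦄ (c₁ : G.Walk u u) (c₂ : G.Walk v v),
    c₁.IsHamiltonianCycle → c₂.IsHamiltonianCycle →
    ∃ φ : G ≃g G, Sym2.map ⇑φ '' {e | e ∈ c₁.edges} = {e | e ∈ c₂.edges}

/-- A finite graph is prime w.r.t. the Cartesian (box) product. -/
def IsPrimeGraph {V : Type*} [Fintype V] (G : SimpleGraph V) : Prop :=
  G.Connected ∧ 2 ≤ Fintype.card V ∧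
    ¬ ∃ (a b : ℕ) (A : SimpleGraph (Fin a)) (B : SimpleGraph (Fin b)),
        2 ≤ a ∧ 2 ≤ b ∧ Nonempty (G ≃g A □ B)

/-- `F` is a Cartesian factor of `G`. -/
def IsCartFactorOf {W V : Type*} (F : SimpleGraph W) (G : SimpleGraph V) : Prop :=
  ∃ (c : ℕ) (C : SimpleGraph (Fin c)), Nonempty (G ≃g F □ C)

/-- Two graphs are relatively prime w.r.t. the Cartesian product: no graph on at least
two vertices is (isomorphic to) a Cartesian factor of both. -/
def RelPrimeGraphs {V W : Type*} (G : SimpleGraph V) (H : SimpleGraph W) : Prop :=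
  ¬ ∃ (w : ℕ) (F : SimpleGraph (Fin w)), 2 ≤ w ∧ IsCartFactorOf F G ∧ IsCartFactorOf F H

/-- The `n`-fold Cartesian (box) power of `G`. -/
def boxPower {V : Type*} (G : SimpleGraph V) (n : ℕ) : SimpleGraph (Fin n → V) where
  Adj f g := ∃ i, G.Adj (f i) (g i) ∧ ∀ j, j ≠ i → f j = g j
  symm := ⟨fun f g ⟨i, h, hj⟩ => ⟨i, h.symm, fun j hji => (hj j hji).symm⟩⟩
  loopless := ⟨fun f ⟨_, h, _⟩ => G.loopless.irrefl _ h⟩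

/-- The Cartesian (box) product of a family of graphs. -/
def piBox {ι : Type*} {W : ι → Type*} (H : ∀ i, SimpleGraph (W i)) :
    SimpleGraph (∀ i, W i) where
  Adj f g := ∃ i, (H i).Adj (f i) (g i) ∧ ∀ j, j ≠ i → f j = g j
  symm := ⟨fun f g ⟨i, h, hj⟩ => ⟨i, h.symm, fun j hji => (hj j hji).symm⟩⟩
  loopless := ⟨fun f ⟨_, h, _⟩ => (H _).loopless.irrefl _ h⟩

/-- The Hamilton compression of a (Hamiltonian) cycle `c`: the largest `k` such that `k`
divides the length of `c` and rotating `c` by `length / k` is induced by an automorphism. -/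
noncomputable def cycleCompression {V : Type*} {G : SimpleGraph V} {v : V}
    (c : G.Walk v v) : ℕ :=
  sSup {k | k ∣ c.length ∧ ∃ φ : G ≃g G,
    ∀ i : ℕ, φ (c.getVert (i % c.length)) = c.getVert ((i + c.length / k) % c.length)}

/-- The Hamilton compression of a graph: the maximum compression over its Hamiltonian
cycles. -/
noncomputable def graphCompression {V : Type*} [DecidableEq V] (G : SimpleGraph V) : ℕ :=
  sSup {k | ∃ (v : V) (c : G.Walk v v), c.IsHamiltonianCycle ∧ cycleCompression c = k}

/-- The Cayley graph of an additive group w.r.t. a connection set `S`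
(intended to satisfy `0 ∉ S` and `-S = S`). -/
def cayleyGraph {Γ : Type*} [AddGroup Γ] (S : Set Γ) : SimpleGraph Γ :=
  SimpleGraph.fromRel (fun x y => y - x ∈ S)

/-- `G` has a `K`-`l`-layer structure: the vertices split into `l` layers, each inducing a
copy of the Hamiltonian graph `K`, with consecutive layers joined by a perfect matching
inducing an isomorphism between them. -/
def HasLayerStructure {V W : Type*} [DecidableEq W] (G : SimpleGraph V)
    (K : SimpleGraph W) (l : ℕ) : Prop :=
  HasHamCycle K ∧
  ∃ (L : V → Fin l) (e : ∀ i : Fin l, {v : V // L v = i} ≃ W),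
    (∀ (i : Fin l) (x y : {v : V // L v = i}), G.Adj x.val y.val ↔ K.Adj (e i x) (e i y)) ∧
    ∀ (i : ℕ) (hi : i + 1 < l) (x : {v : V // L v = ⟨i, Nat.lt_of_succ_lt hi⟩}),
      G.Adj x.val ((e ⟨i + 1, hi⟩).symm (e ⟨i, Nat.lt_of_succ_lt hi⟩ x)).val

/-- The truncation of a (cubic) graph: vertices are the darts of `G`; two darts are
adjacent iff they share their initial vertex (triangle edges) or are reverses of each
other (original edges). -/
def truncGraph {V : Type*} (G : SimpleGraph V) : SimpleGraph G.Dart :=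
  SimpleGraph.fromRel (fun d d' =>
    (d.toProd.1 = d'.toProd.1 ∧ d.toProd.2 ≠ d'.toProd.2) ∨ d'.toProd = d.toProd.swap)

/-- The set of Hamiltonian cycles of `G`, as edge sets. -/
def hamCycleSets {V : Type*} [DecidableEq V] (G : SimpleGraph V) : Set (Set (Sym2 V)) :=
  {E | ∃ (v : V) (c : G.Walk v v), c.IsHamiltonianCycle ∧ E = {e | e ∈ c.edges}}

namespace HamAux
variable {W : Type*} {G' : SimpleGraph W}

/-- Build a walk following `f` from index `s` for `n` steps. -/
def mkWalk (f : ℕ → W) : (s n : ℕ) → (∀ i, s ≤ i → i < s + n → G'.Adj (f i) (f (i+1))) →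
    G'.Walk (f s) (f (s + n))
  | _, 0, _ => Walk.nil
  | s, n+1, h =>
      Walk.cons (h s le_rfl (by omega))
        ((mkWalk f (s+1) n (fun i hi hi2 => h i (by omega) (by omega))).copy rfl
          (congrArg f (by omega)))

lemma mkWalk_support (f : ℕ → W) : ∀ (s n : ℕ)
    (h : ∀ i, s ≤ i → i < s + n → G'.Adj (f i) (f (i+1))),
    (mkWalk f s n h).support = (List.range (n+1)).map (fun i => f (s + i))
  | s, 0, h => by
    have : List.range 1 = [0] := rfl
    simp [mkWalk, this]
  | s, n+1, h => by
    rw [mkWalk, Walk.support_cons, Walk.support_copy, mkWalk_support,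
      List.range_succ_eq_map (n := n+1), List.map_cons, List.map_map]
    refine List.cons_eq_cons.mpr ⟨congrArg f (by omega), ?_⟩
    exact List.map_congr_left (fun i _ => congrArg f (by omega))

lemma mkWalk_edges (f : ℕ → W) : ∀ (s n : ℕ)
    (h : ∀ i, s ≤ i → i < s + n → G'.Adj (f i) (f (i+1))),
    (mkWalk f s n h).edges = (List.range n).map (fun i => s(f (s + i), f (s + i + 1)))
  | s, 0, h => by simp [mkWalk]
  | s, n+1, h => by
    rw [mkWalk, Walk.edges_cons, Walk.edges_copy, mkWalk_edges,
      List.range_succ_eq_map (n := n), List.map_cons, List.map_map]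
    refine List.cons_eq_cons.mpr ⟨?_, ?_⟩
    · have h1 : s = s + 0 := by omega
      have h2 : s + 1 = s + 0 + 1 := by omega
      rw [← h1, ← h2]
    · exact List.map_congr_left (fun i _ => by
        have e1 : s + 1 + i = s + (i+1) := by omega
        have e2 : s + 1 + i + 1 = s + (i+1) + 1 := by omega
        rw [e1]; rfl)

lemma mkWalk_length (f : ℕ → W) : ∀ (s n : ℕ)
    (h : ∀ i, s ≤ i → i < s + n → G'.Adj (f i) (f (i+1))),
    (mkWalk f s n h).length = n
  | s, 0, h => rfl
  | s, n+1, h => by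
    rw [mkWalk, Walk.length_cons, Walk.length_copy, mkWalk_length]

variable [DecidableEq W]

lemma exists_hamCycle (f : ℕ → W) (n : ℕ) (hn : 3 ≤ n)
    (hadj : ∀ i, i < n → G'.Adj (f i) (f (i+1)))
    (hcl : f n = f 0)
    (hinj : ∀ i, i < n → ∀ j, j < n → f i = f j → i = j)
    (hsurj : ∀ x : W, ∃ i, i < n ∧ f i = x) :
    ∃ wlk : G'.Walk (f 0) (f 0), wlk.IsHamiltonianCycle ∧
      wlk.edges = (List.range n).map (fun i => s(f i, f (i+1))) := by
  have hadj' : ∀ i, 0 ≤ i → i < 0 + n → G'.Adj (f i) (f (i+1)) := fun i _ hi =>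
    hadj i (by omega)
  have hzn : f (0 + n) = f 0 := by rw [Nat.zero_add]; exact hcl
  set wlk : G'.Walk (f 0) (f 0) := (mkWalk f 0 n hadj').copy rfl hzn with hwlk
  have hfeq : (fun i => f (0 + i)) = f := funext fun i => congrArg f (Nat.zero_add i)
  have hsup : wlk.support = (List.range (n+1)).map f := by
    rw [hwlk, Walk.support_copy, mkWalk_support, hfeq]
  have hedg : wlk.edges = (List.range n).map (fun i => s(f i, f (i+1))) := by
    rw [hwlk, Walk.edges_copy, mkWalk_edges]
    exact List.map_congr_left (fun i _ => by rw [Nat.zero_add])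
  have hlen : wlk.length = n := by rw [hwlk, Walk.length_copy, mkWalk_length]
  have hsupt : wlk.support.tail = (List.range n).map (fun i => f (i+1)) := by
    rw [hsup, List.range_succ_eq_map, List.map_cons, List.tail_cons, List.map_map]
    rfl
  have hinj' : ∀ p, p ≤ n → ∀ q, q ≤ n → f p = f q →
      p = q ∨ (p = 0 ∧ q = n) ∨ (p = n ∧ q = 0) := by
    intro p hp q hq hfpq
    rcases Nat.lt_or_ge p n with hp' | hp'
    · rcases Nat.lt_or_ge q n with hq' | hq'
      · exact Or.inl (hinj p hp' q hq' hfpq)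
      · have hq'' : q = n := by omega
        subst hq''
        rw [hcl] at hfpq
        have := hinj p hp' 0 (by omega) hfpq
        omega
    · have hp'' : p = n := by omega
      rw [hp'', hcl] at hfpq
      rcases Nat.lt_or_ge q n with hq' | hq'
      · have := hinj 0 (by omega) q hq' hfpq
        omega
      · omega
  have htnodup : wlk.support.tail.Nodup := by
    rw [hsupt]
    refine List.Nodup.map_on ?_ List.nodup_range
    intro x hx y hy hxy
    simp only [List.mem_range] at hx hy
    rcases hinj' (x+1) (by omega) (y+1) (by omega) hxy with h | h | h <;> omega
  have hmemt : ∀ x : W, x ∈ wlk.support.tail := by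
    intro x
    obtain ⟨i, hi, hfi⟩ := hsurj x
    rw [hsupt]
    rcases Nat.eq_zero_or_pos i with h0 | h0
    · subst h0
      refine List.mem_map.mpr ⟨n-1, List.mem_range.mpr (by omega), ?_⟩
      have he : n - 1 + 1 = n := by omega
      rw [he, hcl, hfi]
    · refine List.mem_map.mpr ⟨i-1, List.mem_range.mpr (by omega), ?_⟩
      have he : i - 1 + 1 = i := by omega
      rw [he, hfi]
  have hednodup : wlk.edges.Nodup := by
    rw [hedg]
    refine List.Nodup.map_on ?_ List.nodup_range
    intro x hx y hy hxy
    simp only [List.mem_range] at hx hy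
    rcases Sym2.eq_iff.mp hxy with ⟨h1, h2⟩ | ⟨h1, h2⟩
    · exact hinj x hx y hy h1
    · rcases hinj' x (by omega) (y+1) (by omega) h1 with h | h | h <;>
        rcases hinj' (x+1) (by omega) y (by omega) h2 with h' | h' | h' <;> omega
  have hnenil : wlk ≠ Walk.nil := by
    intro hEq
    rw [hEq] at hlen
    simp only [Walk.length_nil] at hlen
    omega
  have hnil : ¬ wlk.Nil := by
    rw [Walk.nil_iff_length_eq, hlen]
    omega
  have hcyc : wlk.IsCycle := ⟨⟨⟨hednodup⟩, hnenil⟩, htnodup⟩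
  refine ⟨wlk, ⟨hcyc, ?_⟩, hedg⟩
  intro x
  rw [Walk.support_tail_of_not_nil wlk hnil]
  exact List.count_eq_one_of_mem htnodup (hmemt x)

lemma walk_support_eq {u v : W} (p : G'.Walk u v) :
    p.support = (List.range (p.length+1)).map p.getVert := by
  induction p with
  | nil =>
    have : List.range 1 = [0] := rfl
    simp [this]
  | cons h p ih =>
    rw [Walk.support_cons, Walk.length_cons, List.range_succ_eq_map, List.map_cons,
      List.map_map, ih]
    refine List.cons_eq_cons.mpr ⟨rfl, ?_⟩
    exact List.map_congr_left (fun i _ => rfl)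

variable [Fintype W]

lemma ham_facts {a : W} {c : G'.Walk a a} (hc : c.IsHamiltonianCycle) :
    (∀ i, i < Fintype.card W → ∀ j, j < Fintype.card W →
      c.getVert i = c.getVert j → i = j) ∧
    (∀ x : W, ∃ i, i < Fintype.card W ∧ c.getVert i = x) ∧
    (c.getVert (Fintype.card W) = c.getVert 0) ∧
    (∀ m : ℕ, G'.Adj (c.getVert (m % Fintype.card W))
      (c.getVert ((m+1) % Fintype.card W))) := by
  set k := Fintype.card W with hkdef
  have hk : c.length = k := hc.length_eq
  have hk3 : 3 ≤ k := by have := hc.isCycle.three_le_length; omega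
  have hcl0 : c.getVert k = c.getVert 0 := by
    rw [← hk, c.getVert_length, c.getVert_zero]
  have htcount : ∀ x : W, c.support.tail.count x = 1 := by
    intro x
    have := hc.isHamiltonian_tail x
    rwa [Walk.support_tail_of_not_nil c hc.isCycle.not_nil] at this
  have htl : c.support.tail = (List.range k).map (fun i => c.getVert (i+1)) := by
    rw [walk_support_eq c, hk, List.range_succ_eq_map, List.map_cons, List.tail_cons,
      List.map_map]
    rfl
  have hnodup : c.support.tail.Nodup :=
    List.nodup_iff_count_le_one.mpr (fun x => le_of_eq (htcount x))
  have hI : ∀ x ∈ List.range k, ∀ y ∈ List.range k,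
      c.getVert (x+1) = c.getVert (y+1) → x = y :=
    List.inj_on_of_nodup_map (htl ▸ hnodup)
  have hI' : ∀ p q, 1 ≤ p → p ≤ k → 1 ≤ q → q ≤ k →
      c.getVert p = c.getVert q → p = q := by
    intro p q hp1 hpk hq1 hqk hpq
    have e1 : p - 1 + 1 = p := by omega
    have e2 : q - 1 + 1 = q := by omega
    have := hI (p-1) (List.mem_range.mpr (by omega)) (q-1)
      (List.mem_range.mpr (by omega)) (by rw [e1, e2]; exact hpq)
    omega
  have hinj : ∀ i, i < k → ∀ j, j < k → c.getVert i = c.getVert j → i = j := by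
    intro i hi j hj hij
    rcases Nat.eq_zero_or_pos i with h0 | h0 <;> rcases Nat.eq_zero_or_pos j with h1 | h1
    · omega
    · rw [h0, ← hcl0] at hij
      have := hI' k j (by omega) (by omega) (by omega) (by omega) hij
      omega
    · rw [h1, ← hcl0] at hij
      have := hI' i k (by omega) (by omega) (by omega) (by omega) hij
      omega
    · exact hI' i j (by omega) (by omega) (by omega) (by omega) hij
  have hsurj : ∀ x : W, ∃ i, i < k ∧ c.getVert i = x := by
    intro x
    have hx : x ∈ c.support.tail := List.count_pos_iff.mp (by rw [htcount x]; omega)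
    rw [htl] at hx
    obtain ⟨i, hi, hfi⟩ := List.mem_map.mp hx
    rw [List.mem_range] at hi
    rcases Nat.lt_or_ge (i+1) k with h | h
    · exact ⟨i+1, h, hfi⟩
    · refine ⟨0, by omega, ?_⟩
      rw [← hcl0]
      have he : i + 1 = k := by omega
      rwa [he] at hfi
  have hadjm : ∀ m : ℕ, G'.Adj (c.getVert (m % k)) (c.getVert ((m+1) % k)) := by
    intro m
    have hmk : m % k < k := Nat.mod_lt m (by omega)
    have e : (m+1) % k = (m % k + 1) % k := by
      rw [Nat.add_mod, Nat.mod_eq_of_lt (show (1:ℕ) < k by omega)]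
    rcases Nat.lt_or_ge (m % k + 1) k with h | h
    · rw [e, Nat.mod_eq_of_lt h]
      exact c.adj_getVert_succ (by omega)
    · have e2 : m % k + 1 = k := by omega
      rw [e, e2, Nat.mod_self]
      have h2 := c.adj_getVert_succ (i := k - 1) (by omega)
      have e3 : k - 1 + 1 = k := by omega
      rw [e3, hcl0] at h2
      have e4 : m % k = k - 1 := by omega
      rwa [e4]
  exact ⟨hinj, hsurj, hcl0, hadjm⟩

section WShift
variable (k : ℕ) (v : ℕ → W) (a t : ℕ)

lemma wshift_facts (hk3 : 3 ≤ k) (ha : a < k) (ht : t = 1 ∨ t = k - 1)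
    (hinj : ∀ i, i < k → ∀ j, j < k → v i = v j → i = j)
    (hsurj : ∀ x : W, ∃ i, i < k ∧ v i = x)
    (hv0 : v k = v 0)
    (hadjm : ∀ m : ℕ, G'.Adj (v (m % k)) (v ((m+1) % k))) :
    (∀ i, G'.Adj (v ((a + t*i) % k)) (v ((a + t*(i+1)) % k))) ∧
    (∀ i, i < k → ∀ j, j < k → v ((a + t*i) % k) = v ((a + t*j) % k) → i = j) ∧
    (∀ x : W, ∃ i, i < k ∧ v ((a + t*i) % k) = x) ∧
    (v ((a + t*k) % k) = v ((a + t*0) % k)) := by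
  have hkpos : 0 < k := by omega
  have htt : (t : ZMod k) * t = 1 := by
    rcases ht with h | h
    · rw [h]; push_cast; ring
    · rw [h]
      have : ((k - 1 : ℕ) : ZMod k) = -1 := by
        rw [Nat.cast_sub (by omega : 1 ≤ k)]
        simp [ZMod.natCast_self]
      rw [this]; ring
  constructor
  · -- adjacency
    intro i
    rcases ht with h | h
    · subst h
      simp only [one_mul]
      have e : a + (i + 1) = (a + i) + 1 := by omega
      rw [e]
      exact hadjm (a + i)
    · subst h
      have e1 : a + (k-1)*(i+1) = (a + (k-1)*i) + k - 1 := by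
        rw [Nat.mul_succ]; omega
      rw [e1]
      set M := a + (k-1)*i with hM
      have h2 := hadjm (M + k - 1)
      have e2 : M + k - 1 + 1 = M + k := by omega
      rw [e2, Nat.add_mod_right] at h2
      exact h2.symm
  have eqz : ∀ p q : ℕ, ((p : ZMod k) = (q : ZMod k)) ↔ p % k = q % k := by
    intro p q
    exact ZMod.natCast_eq_natCast_iff' p q k
  constructor
  · -- injectivity
    intro i hi j hj hvij
    have h1 : (a + t*i) % k = (a + t*j) % k :=
      hinj _ (Nat.mod_lt _ hkpos) _ (Nat.mod_lt _ hkpos) hvij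
    have h2 : ((a + t*i : ℕ) : ZMod k) = ((a + t*j : ℕ) : ZMod k) := by
      rw [eqz]
      simpa using h1
    push_cast at h2
    have h3 : (t : ZMod k) * i = t * j := by
      have := add_left_cancel h2
      exact this
    have h4 : (i : ZMod k) = j := by
      calc (i : ZMod k) = (t * t) * i := by rw [htt]; ring
      _ = t * (t * (i : ZMod k)) := by ring
      _ = t * (t * (j : ZMod k)) := by rw [h3]
      _ = (t * t) * j := by ring
      _ = j := by rw [htt]; ring
    rw [eqz, Nat.mod_eq_of_lt hi, Nat.mod_eq_of_lt hj] at h4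
    exact h4
  constructor
  · -- surjectivity
    intro x
    obtain ⟨m, hm, hvm⟩ := hsurj x
    refine ⟨(t * (m + k - a)) % k, Nat.mod_lt _ hkpos, ?_⟩
    have hsub : ((m + k - a : ℕ) : ZMod k) = (m : ZMod k) + (k : ZMod k) - (a : ZMod k) := by
      rw [Nat.cast_sub (by omega : a ≤ m + k)]
      push_cast
      ring
    have h2 : ((a + t * ((t * (m + k - a)) % k) : ℕ) : ZMod k) = ((m : ℕ) : ZMod k) := by
      push_cast [ZMod.natCast_mod]
      rw [hsub, ZMod.natCast_self]
      have htt' : (t : ZMod k) * (t * ((m : ZMod k) + 0 - a)) = ((t : ZMod k) * t) * ((m : ZMod k) + 0 - a) := by ring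
      rw [htt', htt]
      ring
    rw [eqz, Nat.mod_eq_of_lt hm] at h2
    rw [h2]
    exact hvm
  · -- closure
    have e : (a + t * k) % k = (a + t * 0) % k := by
      rw [Nat.mul_zero, Nat.add_zero, Nat.add_mul_mod_self_right]
    rw [e]

end WShift

lemma chord_or_iso {a : W} {c : G'.Walk a a} (hc : c.IsHamiltonianCycle) :
    (∃ x y : W, G'.Adj x y ∧ ∀ m, m < Fintype.card W →
      s(x, y) ≠ s(c.getVert m, c.getVert ((m+1) % Fintype.card W))) ∨
    Nonempty (G' ≃g cycleGraph (Fintype.card W)) := by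
  obtain ⟨hinj, hsurj, hcl0, hadjm⟩ := ham_facts hc
  set k := Fintype.card W with hkdef
  have hk3 : 3 ≤ k := by
    have h1 := hc.isCycle.three_le_length
    have h2 : c.length = k := hc.length_eq
    omega
  haveI : NeZero k := ⟨by omega⟩
  by_cases hch : ∃ x y : W, G'.Adj x y ∧ ∀ m, m < k →
      s(x, y) ≠ s(c.getVert m, c.getVert ((m+1) % k))
  · exact Or.inl hch
  push_neg at hch
  right
  -- helper about mod
  have hmod : ∀ V : ℕ, V < 2*k → V % k = (if V < k then V else V - k) := by
    intro V hV
    split_ifs with h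
    · exact Nat.mod_eq_of_lt h
    · rw [Nat.mod_eq_sub_mod (by omega), Nat.mod_eq_of_lt (by omega)]
  have hsubval : ∀ i j : Fin k, (j - i).val = (j.val + (k - i.val)) % k := by
    intro i j
    rw [Fin.sub_def]
    simp [Nat.add_comm]
  -- the defining bijection
  set g : Fin k → W := fun i => c.getVert i.val with hg
  have hgbij : Function.Bijective g := by
    constructor
    · intro i j hij
      exact Fin.ext (hinj i.val i.isLt j.val j.isLt hij)
    · intro x
      obtain ⟨i, hi, hvi⟩ := hsurj x
      exact ⟨⟨i, hi⟩, hvi⟩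
  have main : ∀ i j : Fin k, (cycleGraph k).Adj i j ↔ G'.Adj (g i) (g j) := by
    intro i j
    rw [cycleGraph_adj']
    constructor
    · rintro (h | h)
      · -- (i - j).val = 1, so i.val = (j.val + 1) % k : edge from j to i
        rw [hsubval j i] at h
        have hiv : i.val = (j.val + 1) % k := by
          have hb : i.val + (k - j.val) < 2*k := by omega
          rw [hmod _ hb] at h
          have hb2 : (j.val + 1) % k = (if j.val + 1 < k then j.val + 1 else j.val + 1 - k) :=
            hmod _ (by omega)
          rw [hb2]
          split_ifs at h ⊢ <;> omega
        have := hadjm j.val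
        rw [Nat.mod_eq_of_lt j.isLt, ← hiv] at this
        exact this.symm
      · rw [hsubval i j] at h
        have hjv : j.val = (i.val + 1) % k := by
          have hb : j.val + (k - i.val) < 2*k := by omega
          rw [hmod _ hb] at h
          have hb2 : (i.val + 1) % k = (if i.val + 1 < k then i.val + 1 else i.val + 1 - k) :=
            hmod _ (by omega)
          rw [hb2]
          split_ifs at h ⊢ <;> omega
        have := hadjm i.val
        rw [Nat.mod_eq_of_lt i.isLt, ← hjv] at this
        exact this
    · intro hadj
      obtain ⟨m, hm, hsym⟩ := hch (g i) (g j) hadj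
      have hm1 : (m+1) % k < k := Nat.mod_lt _ (by omega)
      rcases Sym2.eq_iff.mp hsym with ⟨h1, h2⟩ | ⟨h1, h2⟩
      · -- i.val = m, j.val = (m+1)%k
        have hi : i.val = m := hinj i.val i.isLt m hm h1
        have hj : j.val = (m+1) % k := hinj j.val j.isLt _ hm1 h2
        right
        rw [hsubval i j]
        have hb : j.val + (k - i.val) < 2*k := by omega
        rw [hmod _ hb]
        have hb2 : (m + 1) % k = (if m + 1 < k then m + 1 else m + 1 - k) := hmod _ (by omega)
        rw [hb2] at hj
        split_ifs at hj ⊢ <;> omega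
      · have hi : i.val = (m+1) % k := hinj i.val i.isLt _ hm1 h1
        have hj : j.val = m := hinj j.val j.isLt m hm h2
        left
        rw [hsubval j i]
        have hb : i.val + (k - j.val) < 2*k := by omega
        rw [hmod _ hb]
        have hb2 : (m + 1) % k = (if m + 1 < k then m + 1 else m + 1 - k) := hmod _ (by omega)
        rw [hb2] at hi
        split_ifs at hi ⊢ <;> omega
  refine ⟨?_⟩
  refine ⟨(Equiv.ofBijective g hgbij).symm, ?_⟩
  intro u w
  rw [main]
  rw [show g ((Equiv.ofBijective g hgbij).symm u) = u from
      (Equiv.ofBijective g hgbij).apply_symm_apply u,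
    show g ((Equiv.ofBijective g hgbij).symm w) = w from
      (Equiv.ofBijective g hgbij).apply_symm_apply w]

section Product
variable {G : SimpleGraph W}

lemma phi_fst_eq (φ : (G □ completeGraph (Fin 2)) ≃g (G □ completeGraph (Fin 2)))
    (hodd : Odd (Fintype.card W)) (hreach : ∀ x y : W, G.Reachable x y) :
    ∀ x y : W × Fin 2, (G □ completeGraph (Fin 2)).Adj x y →
      x.1 = y.1 → (φ x).1 = (φ y).1 := by
  have fin2aux : ∀ x y z : Fin 2, x ≠ y → y ≠ z → x = z := by decide
  have fin2cases : ∀ s : Fin 2, s = 0 ∨ s = 1 := by decide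
  have hmapadj : ∀ x y : W × Fin 2, (G □ completeGraph (Fin 2)).Adj x y →
      (G □ completeGraph (Fin 2)).Adj (φ x) (φ y) := by
    intro x y h
    exact φ.map_rel_iff.mpr h
  have hvert : ∀ (u : W) (s s' : Fin 2), s ≠ s' → (G □ completeGraph (Fin 2)).Adj (u,s) (u,s') := by
    intro u s s' hne
    rw [boxProd_adj]
    right
    exact ⟨hne, rfl⟩
  have hA : ∀ (u : W) (s s' : Fin 2), s ≠ s' →
      (φ (u,s)).2 ≠ (φ (u,s')).2 → (φ (u,s)).1 = (φ (u,s')).1 := by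
    intro u s s' hne hsnd
    have h2 := hmapadj _ _ (hvert u s s' hne)
    rw [boxProd_adj] at h2
    rcases h2 with ⟨_, h2⟩ | ⟨_, h1⟩
    · exact absurd h2 hsnd
    · exact h1
  have hstep : ∀ u w', G.Adj u w' →
      (φ (u,0)).2 ≠ (φ (u,1)).2 → (φ (w',0)).2 ≠ (φ (w',1)).2 := by
    intro u w' hadj hu
    by_contra hw
    have hc1 : (φ (u,0)).1 = (φ (u,1)).1 := hA u 0 1 (by decide) hu
    have key : ∀ i i' : Fin 2, i ≠ i' → (φ (u,i)).2 ≠ (φ (w',0)).2 → False := by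
      intro i i' hii' hi
      have hneq : (φ (u,i)).2 ≠ (φ (u,i')).2 := by
        rcases fin2cases i with h | h <;> rcases fin2cases i' with h' | h' <;>
          subst h <;> subst h' <;> first | exact absurd rfl hii' | exact hu | exact hu.symm
      have hi' : (φ (u,i')).2 = (φ (w',0)).2 := fin2aux _ _ _ (Ne.symm hneq) hi
      have hhor : (G □ completeGraph (Fin 2)).Adj (u,i) (w',i) := by
        rw [boxProd_adj]
        left
        exact ⟨hadj, rfl⟩
      have himg := hmapadj _ _ hhor
      rw [boxProd_adj] at himg
      have hwi : (φ (w',i)).2 = (φ (w',0)).2 := by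
        rcases fin2cases i with h | h <;> subst h
        · rfl
        · exact hw.symm
      have hfst : (φ (u,i)).1 = (φ (w',i)).1 := by
        rcases himg with ⟨_, h2⟩ | ⟨_, h1⟩
        · rw [hwi] at h2
          exact absurd h2 hi
        · exact h1
      have hcc : ∀ j j' : Fin 2, j ≠ j' → (φ (u,j)).1 = (φ (u,j')).1 := by
        intro j j' hjj'
        rcases fin2cases j with h | h <;> rcases fin2cases j' with h' | h' <;>
          subst h <;> subst h' <;>
          first | exact absurd rfl hjj' | exact hc1 | exact hc1.symm | rfl
      have hfst2 : (φ (u,i')).1 = (φ (w',i)).1 := by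
        rw [← hfst]
        exact hcc i' i (Ne.symm hii')
      have heq : φ (u,i') = φ (w',i) := Prod.ext hfst2 (hi'.trans hwi.symm)
      have huw : (u,i') = (w',i) := φ.toEquiv.injective heq
      have : u = w' := congrArg Prod.fst huw
      exact G.irrefl (this ▸ hadj)
    by_cases h0 : (φ (u,0)).2 = (φ (w',0)).2
    · refine key 1 0 (by decide) ?_
      rw [← h0]
      exact hu.symm
    · exact key 0 1 (by decide) h0
  have hex : ∃ u, (φ (u,0)).2 ≠ (φ (u,1)).2 := by
    by_contra hnex
    push_neg at hnex
    have hsig : ∀ x : W × Fin 2, (φ x).2 = (φ (x.1, 0)).2 := by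
      rintro ⟨u, s⟩
      rcases fin2cases s with h | h <;> subst h
      · rfl
      · exact (hnex u).symm
    classical
    have hcardB : (Finset.univ.filter (fun y : W × Fin 2 => y.2 = 0)).card = Fintype.card W := by
      have himg : (Finset.univ.filter (fun y : W × Fin 2 => y.2 = 0)) =
          Finset.univ.image (fun u : W => (u, (0 : Fin 2))) := by
        ext ⟨u, s⟩
        simp only [Finset.mem_filter, Finset.mem_univ, true_and, Finset.mem_image,
          Prod.mk.injEq]
        constructor
        · intro h; exact ⟨u, rfl, h.symm⟩
        · rintro ⟨v, rfl, rfl⟩; rfl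
      rw [himg, Finset.card_image_of_injective _
        (fun a b h => ((Prod.mk.injEq _ _ _ _).mp h).1), Finset.card_univ]
    have hcardA : (Finset.univ.filter (fun x : W × Fin 2 => (φ x).2 = 0)).card =
        (Finset.univ.filter (fun y : W × Fin 2 => y.2 = 0)).card := by
      refine Finset.card_bij (fun x _ => φ x) ?_ ?_ ?_
      · intro x hx
        simp only [Finset.mem_filter, Finset.mem_univ, true_and] at hx ⊢
        exact hx
      · intro x _ y _ h
        exact φ.toEquiv.injective h
      · intro y hy
        simp only [Finset.mem_filter, Finset.mem_univ, true_and] at hy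
        refine ⟨φ.symm y, ?_, ?_⟩
        · simp only [Finset.mem_filter, Finset.mem_univ, true_and]
          rw [show φ (φ.symm y) = y from φ.apply_symm_apply y]
          exact hy
        · exact φ.apply_symm_apply y
    have hprod : (Finset.univ.filter (fun x : W × Fin 2 => (φ x).2 = 0)) =
        (Finset.univ.filter (fun u : W => (φ (u, (0:Fin 2))).2 = 0)) ×ˢ
        (Finset.univ : Finset (Fin 2)) := by
      ext ⟨u, s⟩
      simp only [Finset.mem_filter, Finset.mem_univ, true_and, Finset.mem_product, and_true]
      rw [hsig (u, s)]
    have hcard2 : (Finset.univ.filter (fun x : W × Fin 2 => (φ x).2 = 0)).card =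
        (Finset.univ.filter (fun u : W => (φ (u, (0:Fin 2))).2 = 0)).card * 2 := by
      rw [hprod, Finset.card_product]
      simp
    obtain ⟨r, hr⟩ := hodd
    omega
  have hall : ∀ u, (φ (u,0)).2 ≠ (φ (u,1)).2 := by
    obtain ⟨u₀, hu₀⟩ := hex
    have walkprop : ∀ {x y : W} (p : G.Walk x y),
        (φ (x,0)).2 ≠ (φ (x,1)).2 → (φ (y,0)).2 ≠ (φ (y,1)).2 := by
      intro x y p
      induction p with
      | nil => exact id
      | cons h p ih => exact fun hx => ih (hstep _ _ h hx)
    intro u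
    obtain ⟨p⟩ := hreach u₀ u
    exact walkprop p hu₀
  intro x y hadj hfst
  have hne : x.2 ≠ y.2 := by
    rw [boxProd_adj] at hadj
    rcases hadj with ⟨h1, _⟩ | ⟨h1, _⟩
    · rw [hfst] at h1
      exact absurd h1 G.irrefl
    · exact h1
  have hspl := hall x.1
  have himg : (φ (x.1, x.2)).1 = (φ (x.1, y.2)).1 := by
    refine hA x.1 x.2 y.2 hne ?_
    rcases fin2cases x.2 with h | h <;> rcases fin2cases y.2 with h' | h' <;>
      rw [h, h'] at hne ⊢ <;>
      first
        | exact absurd rfl hne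
        | exact hspl
        | exact hspl.symm
  rw [Prod.mk.eta] at himg
  rw [show (x.1, y.2) = y from Prod.ext hfst rfl] at himg
  exact himg

end Product
section Constructions
variable {G : SimpleGraph W}

lemma box_adj_horiz {x y : W} (s : Fin 2) (h : G.Adj x y) :
    (G □ completeGraph (Fin 2)).Adj (x, s) (y, s) := by
  rw [boxProd_adj]; left; exact ⟨h, rfl⟩

lemma box_adj_vert (x : W) {s s' : Fin 2} (h : s ≠ s') :
    (G □ completeGraph (Fin 2)).Adj (x, s) (x, s') := by
  rw [boxProd_adj]; right; exact ⟨h, rfl⟩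

lemma buildC1 (k : ℕ) (w : ℕ → W) (hk : 3 ≤ k)
    (hadj : ∀ i, G.Adj (w i) (w (i+1)))
    (hinj : ∀ i, i < k → ∀ i', i' < k → w i = w i' → i = i')
    (hsurj : ∀ x : W, ∃ i, i < k ∧ w i = x) :
    ∃ (z : W × Fin 2) (c₁ : (G □ completeGraph (Fin 2)).Walk z z),
      c₁.IsHamiltonianCycle ∧
      (∀ e ∈ c₁.edges, (Sym2.map Prod.fst e).IsDiag →
        e = s((w (k-1), (0:Fin 2)), (w (k-1), 1)) ∨ e = s((w 0, (1:Fin 2)), (w 0, 0))) ∧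
      s((w (k-1), (0:Fin 2)), (w (k-1), 1)) ∈ c₁.edges ∧
      s((w 0, (1:Fin 2)), (w 0, 0)) ∈ c₁.edges := by
  classical
  set F : ℕ → W × Fin 2 := fun i =>
    if i < k then (w i, 0) else if i < 2*k then (w (2*k - 1 - i), 1) else (w 0, 0) with hF
  have hF1 : ∀ i, i < k → F i = (w i, 0) := by
    intro i hi
    simp only [hF]
    rw [if_pos hi]
  have hF2 : ∀ i, k ≤ i → i < 2*k → F i = (w (2*k - 1 - i), 1) := by
    intro i hi hi2
    simp only [hF]
    rw [if_neg (by omega), if_pos hi2]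
  have hF3 : F (2*k) = (w 0, 0) := by
    simp only [hF]
    rw [if_neg (by omega), if_neg (by omega)]
  have hFadj : ∀ i, i < 2*k → (G □ completeGraph (Fin 2)).Adj (F i) (F (i+1)) := by
    intro i hi
    rcases Nat.lt_or_ge (i+1) k with h1 | h1
    · rw [hF1 i (by omega), hF1 (i+1) h1]
      exact box_adj_horiz _ (hadj i)
    · rcases Nat.lt_or_ge i k with h2 | h2
      · -- i = k-1
        have e1 : i = k - 1 := by omega
        rw [hF1 i h2, hF2 (i+1) (by omega) (by omega)]
        have e2 : 2*k - 1 - (i+1) = i := by omega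
        rw [e2]
        exact box_adj_vert _ (by decide)
      · rcases Nat.lt_or_ge (i+1) (2*k) with h3 | h3
        · rw [hF2 i h2 (by omega), hF2 (i+1) (by omega) h3]
          have e2 : 2*k - 1 - i = (2*k - 1 - (i+1)) + 1 := by omega
          rw [e2]
          exact (box_adj_horiz _ (hadj (2*k - 1 - (i+1)))).symm
        · -- i = 2k - 1
          have e1 : i = 2*k - 1 := by omega
          rw [hF2 i h2 (by omega), show i + 1 = 2*k by omega, hF3]
          have e2 : 2*k - 1 - i = 0 := by omega
          rw [e2]
          exact box_adj_vert _ (by decide)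
  have hFinj : ∀ i, i < 2*k → ∀ i', i' < 2*k → F i = F i' → i = i' := by
    intro i hi i' hi' hFii
    rcases Nat.lt_or_ge i k with h1 | h1 <;> rcases Nat.lt_or_ge i' k with h2 | h2
    · rw [hF1 i h1, hF1 i' h2] at hFii
      exact hinj i h1 i' h2 (congrArg Prod.fst hFii)
    · rw [hF1 i h1, hF2 i' h2 hi'] at hFii
      exfalso
      simpa using congrArg Prod.snd hFii
    · rw [hF2 i h1 hi, hF1 i' h2] at hFii
      exfalso
      simpa using congrArg Prod.snd hFii
    · rw [hF2 i h1 hi, hF2 i' h2 hi'] at hFii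
      have := hinj (2*k - 1 - i) (by omega) (2*k - 1 - i') (by omega)
        (congrArg Prod.fst hFii)
      omega
  have hFsurj : ∀ x : W × Fin 2, ∃ i, i < 2*k ∧ F i = x := by
    rintro ⟨y, s⟩
    obtain ⟨i₀, hi₀, hwi₀⟩ := hsurj y
    have : s = 0 ∨ s = 1 := by omega
    rcases this with rfl | rfl
    · exact ⟨i₀, by omega, by rw [hF1 i₀ hi₀, hwi₀]⟩
    · refine ⟨2*k - 1 - i₀, by omega, ?_⟩
      rw [hF2 _ (by omega) (by omega)]
      have e : 2*k - 1 - (2*k - 1 - i₀) = i₀ := by omega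
      rw [e, hwi₀]
  have hFcl : F (2*k) = F 0 := by
    rw [hF3, hF1 0 (by omega)]
  obtain ⟨c₁, hham, hedges⟩ := exists_hamCycle (G' := G □ completeGraph (Fin 2)) F (2*k)
    (by omega) hFadj hFcl hFinj hFsurj
  refine ⟨F 0, c₁, hham, ?_, ?_, ?_⟩
  · intro e he hdiag
    rw [hedges] at he
    obtain ⟨i, hi, hei⟩ := List.mem_map.mp he
    rw [List.mem_range] at hi
    rcases Nat.lt_or_ge (i+1) k with h1 | h1
    · exfalso
      rw [hF1 i (by omega), hF1 (i+1) h1] at hei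
      rw [← hei, Sym2.map_pair_eq, Sym2.mk_isDiag_iff] at hdiag
      have := hinj i (by omega) (i+1) h1 hdiag
      omega
    · rcases Nat.lt_or_ge i k with h2 | h2
      · left
        rw [hF1 i h2, hF2 (i+1) (by omega) (by omega)] at hei
        have e1 : i = k - 1 := by omega
        have e2 : 2*k - 1 - (i+1) = k - 1 := by omega
        rw [e2] at hei
        rw [e1] at hei
        exact hei.symm
      · rcases Nat.lt_or_ge (i+1) (2*k) with h3 | h3
        · exfalso
          rw [hF2 i h2 (by omega), hF2 (i+1) (by omega) h3] at hei
          rw [← hei, Sym2.map_pair_eq, Sym2.mk_isDiag_iff] at hdiag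
          have := hinj (2*k - 1 - i) (by omega) (2*k - 1 - (i+1)) (by omega) hdiag
          omega
        · right
          rw [hF2 i h2 (by omega), show i + 1 = 2*k by omega, hF3] at hei
          have e2 : 2*k - 1 - i = 0 := by omega
          rw [e2] at hei
          exact hei.symm
  · rw [hedges]
    refine List.mem_map.mpr ⟨k - 1, List.mem_range.mpr (by omega), ?_⟩
    rw [hF1 (k-1) (by omega), hF2 (k-1+1) (by omega) (by omega)]
    have e2 : 2*k - 1 - (k - 1 + 1) = k - 1 := by omega
    rw [e2]
  · rw [hedges]
    refine List.mem_map.mpr ⟨2*k - 1, List.mem_range.mpr (by omega), ?_⟩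
    rw [hF2 (2*k-1) (by omega) (by omega), show 2*k - 1 + 1 = 2*k by omega, hF3]
    have e2 : 2*k - 1 - (2*k - 1) = 0 := by omega
    rw [e2]

end Constructions
section Constructions2
variable {G : SimpleGraph W}

lemma buildC2 (k j : ℕ) (w : ℕ → W) (hk : 3 ≤ k) (hj2 : 2 ≤ j) (hjk : j + 3 ≤ k)
    (hjeven : j % 2 = 0) (hkodd : k % 2 = 1)
    (hadj : ∀ i, G.Adj (w i) (w (i+1)))
    (hinj : ∀ i, i < k → ∀ i', i' < k → w i = w i' → i = i')
    (hsurj : ∀ x : W, ∃ i, i < k ∧ w i = x)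
    (hw0 : w k = w 0)
    (hchord : G.Adj (w 0) (w j)) :
    ∃ (z : W × Fin 2) (c₂ : (G □ completeGraph (Fin 2)).Walk z z),
      c₂.IsHamiltonianCycle ∧
      ∀ r, j - 1 ≤ r → r ≤ j + 2 → s((w r, (0:Fin 2)), (w r, 1)) ∈ c₂.edges := by
  classical
  set F : ℕ → W × Fin 2 := fun i =>
    if i < j then (w i, (0:Fin 2)) else if i < 2*j then (w (2*j - 1 - i), 1)
    else (w (j + (i - 2*j)/2), if ((i - 2*j + 1)/2) % 2 = 0 then (1:Fin 2) else 0) with hF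
  have hFa : ∀ i, i < j → F i = (w i, 0) := by
    intro i hi
    simp only [hF]
    rw [if_pos hi]
  have hFb : ∀ i, j ≤ i → i < 2*j → F i = (w (2*j - 1 - i), 1) := by
    intro i hi hi2
    simp only [hF]
    rw [if_neg (by omega), if_pos hi2]
  have hFc : ∀ i, 2*j ≤ i →
      F i = (w (j + (i - 2*j)/2), if ((i - 2*j + 1)/2) % 2 = 0 then (1:Fin 2) else 0) := by
    intro i hi
    simp only [hF]
    rw [if_neg (by omega), if_neg (by omega)]
  have hFadj : ∀ i, i < 2*k → (G □ completeGraph (Fin 2)).Adj (F i) (F (i+1)) := by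
    intro i hi
    rcases Nat.lt_or_ge (i+1) j with h1 | h1
    · rw [hFa i (by omega), hFa (i+1) h1]
      exact box_adj_horiz _ (hadj i)
    rcases Nat.lt_or_ge i j with h2 | h2
    · -- i = j - 1
      rw [hFa i h2, hFb (i+1) (by omega) (by omega)]
      have e2 : 2*j - 1 - (i+1) = i := by omega
      rw [e2]
      exact box_adj_vert _ (by decide)
    rcases Nat.lt_or_ge (i+1) (2*j) with h3 | h3
    · rw [hFb i h2 (by omega), hFb (i+1) (by omega) h3]
      have e2 : 2*j - 1 - i = (2*j - 1 - (i+1)) + 1 := by omega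
      rw [e2]
      exact (box_adj_horiz _ (hadj (2*j - 1 - (i+1)))).symm
    rcases Nat.lt_or_ge i (2*j) with h4 | h4
    · -- i = 2j - 1, chord step
      rw [hFb i h2 (by omega), hFc (i+1) (by omega)]
      have e2 : 2*j - 1 - i = 0 := by omega
      have e3 : j + (i + 1 - 2*j)/2 = j := by omega
      rw [e2, e3, if_pos (by omega)]
      exact box_adj_horiz _ hchord
    -- zigzag region
    have hm : (i - 2*j) % 2 = 0 ∨ (i - 2*j) % 2 = 1 := by omega
    rcases hm with hm | hm
    · -- vertical step
      rw [hFc i h4, hFc (i+1) (by omega)]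
      have ec : j + (i + 1 - 2*j)/2 = j + (i - 2*j)/2 := by omega
      rw [ec]
      have hr : ((i - 2*j)/2) % 2 = 0 ∨ ((i - 2*j)/2) % 2 = 1 := by omega
      rcases hr with hr | hr
      · rw [if_pos (by omega), if_neg (by omega)]
        exact box_adj_vert _ (by decide)
      · rw [if_neg (by omega), if_pos (by omega)]
        exact box_adj_vert _ (by decide)
    · -- horizontal step
      rw [hFc i h4, hFc (i+1) (by omega)]
      have ec : j + (i + 1 - 2*j)/2 = (j + (i - 2*j)/2) + 1 := by omega
      rw [ec]
      have hr : ((i - 2*j)/2) % 2 = 0 ∨ ((i - 2*j)/2) % 2 = 1 := by omega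
      rcases hr with hr | hr
      · rw [if_neg (by omega), if_neg (by omega)]
        exact box_adj_horiz _ (hadj _)
      · rw [if_pos (by omega), if_pos (by omega)]
        exact box_adj_horiz _ (hadj _)
  have hFinj : ∀ i, i < 2*k → ∀ i', i' < 2*k → F i = F i' → i = i' := by
    have main : ∀ i, i < 2*k → ∀ i', i' < 2*k → i ≤ i' → F i = F i' → i = i' := by
      intro i hi i' hi' hle hFii
      rcases Nat.lt_or_ge i j with h1 | h1 <;> rcases Nat.lt_or_ge i' j with h2 | h2
      · rw [hFa i h1, hFa i' h2] at hFii
        exact hinj i (by omega) i' (by omega) (congrArg Prod.fst hFii)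
      · rcases Nat.lt_or_ge i' (2*j) with h3 | h3
        · rw [hFa i h1, hFb i' h2 h3] at hFii
          exfalso
          simpa using congrArg Prod.snd hFii
        · rw [hFa i h1, hFc i' h3] at hFii
          by_cases hcond : ((i' - 2*j + 1)/2) % 2 = 0
          · rw [if_pos hcond] at hFii
            exfalso
            simpa using congrArg Prod.snd hFii
          · rw [if_neg hcond] at hFii
            have := hinj i (by omega) (j + (i' - 2*j)/2) (by omega)
              (congrArg Prod.fst hFii)
            omega
      · omega
      · rcases Nat.lt_or_ge i (2*j) with h3 | h3 <;> rcases Nat.lt_or_ge i' (2*j) with h4 | h4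
        · rw [hFb i h1 h3, hFb i' h2 h4] at hFii
          have := hinj (2*j - 1 - i) (by omega) (2*j - 1 - i') (by omega)
            (congrArg Prod.fst hFii)
          omega
        · rw [hFb i h1 h3, hFc i' h4] at hFii
          by_cases hcond : ((i' - 2*j + 1)/2) % 2 = 0
          · rw [if_pos hcond] at hFii
            have := hinj (2*j - 1 - i) (by omega) (j + (i' - 2*j)/2) (by omega)
              (congrArg Prod.fst hFii)
            omega
          · rw [if_neg hcond] at hFii
            exfalso
            simpa using congrArg Prod.snd hFii
        · omega
        · rw [hFc i h3, hFc i' h4] at hFii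
          by_cases hc1 : ((i - 2*j + 1)/2) % 2 = 0 <;>
            by_cases hc2 : ((i' - 2*j + 1)/2) % 2 = 0
          · rw [if_pos hc1, if_pos hc2] at hFii
            have := hinj (j + (i - 2*j)/2) (by omega) (j + (i' - 2*j)/2) (by omega)
              (congrArg Prod.fst hFii)
            omega
          · rw [if_pos hc1, if_neg hc2] at hFii
            exfalso
            simpa using congrArg Prod.snd hFii
          · rw [if_neg hc1, if_pos hc2] at hFii
            exfalso
            simpa using congrArg Prod.snd hFii
          · rw [if_neg hc1, if_neg hc2] at hFii
            have := hinj (j + (i - 2*j)/2) (by omega) (j + (i' - 2*j)/2) (by omega)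
              (congrArg Prod.fst hFii)
            omega
    intro i hi i' hi' hFii
    rcases le_or_gt i i' with h | h
    · exact main i hi i' hi' h hFii
    · exact (main i' hi' i hi (by omega) hFii.symm).symm
  have hFsurj : ∀ x : W × Fin 2, ∃ i, i < 2*k ∧ F i = x := by
    rintro ⟨y, s⟩
    obtain ⟨i₀, hi₀, hwi₀⟩ := hsurj y
    have hs : s = 0 ∨ s = 1 := by omega
    rcases Nat.lt_or_ge i₀ j with hlt | hge
    · rcases hs with rfl | rfl
      · exact ⟨i₀, by omega, by rw [hFa i₀ hlt, hwi₀]⟩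
      · refine ⟨2*j - 1 - i₀, by omega, ?_⟩
        rw [hFb _ (by omega) (by omega)]
        have e : 2*j - 1 - (2*j - 1 - i₀) = i₀ := by omega
        rw [e, hwi₀]
    · -- zigzag region, column i₀ = j + r'
      by_cases hpar : (i₀ - j) % 2 = 0
      · rcases hs with rfl | rfl
        · refine ⟨2*j + (2*(i₀ - j) + 1), by omega, ?_⟩
          rw [hFc _ (by omega)]
          have e1 : j + (2*j + (2*(i₀ - j) + 1) - 2*j)/2 = i₀ := by omega
          rw [e1, hwi₀, if_neg (by omega)]
        · refine ⟨2*j + 2*(i₀ - j), by omega, ?_⟩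
          rw [hFc _ (by omega)]
          have e1 : j + (2*j + 2*(i₀ - j) - 2*j)/2 = i₀ := by omega
          rw [e1, hwi₀, if_pos (by omega)]
      · rcases hs with rfl | rfl
        · refine ⟨2*j + 2*(i₀ - j), by omega, ?_⟩
          rw [hFc _ (by omega)]
          have e1 : j + (2*j + 2*(i₀ - j) - 2*j)/2 = i₀ := by omega
          rw [e1, hwi₀, if_neg (by omega)]
        · refine ⟨2*j + (2*(i₀ - j) + 1), by omega, ?_⟩
          rw [hFc _ (by omega)]
          have e1 : j + (2*j + (2*(i₀ - j) + 1) - 2*j)/2 = i₀ := by omega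
          rw [e1, hwi₀, if_pos (by omega)]
  have hFcl : F (2*k) = F 0 := by
    rw [hFc (2*k) (by omega), hFa 0 (by omega)]
    have e1 : j + (2*k - 2*j)/2 = k := by omega
    rw [e1, hw0, if_neg (by omega)]
  obtain ⟨c₂, hham, hedges⟩ := exists_hamCycle (G' := G □ completeGraph (Fin 2)) F (2*k)
    (by omega) hFadj hFcl hFinj hFsurj
  refine ⟨F 0, c₂, hham, ?_⟩
  intro r hr1 hr2
  rw [hedges]
  have hcases : r = j - 1 ∨ r = j ∨ r = j + 1 ∨ r = j + 2 := by omega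
  rcases hcases with h | h | h | h <;> rw [h]
  · refine List.mem_map.mpr ⟨j - 1, List.mem_range.mpr (by omega), ?_⟩
    rw [hFa (j-1) (by omega), hFb (j-1+1) (by omega) (by omega)]
    have e : 2*j - 1 - (j - 1 + 1) = j - 1 := by omega
    rw [e]
  · refine List.mem_map.mpr ⟨2*j, List.mem_range.mpr (by omega), ?_⟩
    rw [hFc (2*j) (by omega), hFc (2*j+1) (by omega)]
    have e1 : j + (2*j - 2*j)/2 = j := by omega
    have e2 : j + (2*j + 1 - 2*j)/2 = j := by omega
    rw [e1, e2, if_pos (by omega), if_neg (by omega)]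
    exact Sym2.eq_swap
  · refine List.mem_map.mpr ⟨2*j + 2, List.mem_range.mpr (by omega), ?_⟩
    rw [hFc (2*j+2) (by omega), hFc (2*j+2+1) (by omega)]
    have e1 : j + (2*j + 2 - 2*j)/2 = j + 1 := by omega
    have e2 : j + (2*j + 2 + 1 - 2*j)/2 = j + 1 := by omega
    rw [e1, e2, if_neg (by omega), if_pos (by omega)]
  · refine List.mem_map.mpr ⟨2*j + 4, List.mem_range.mpr (by omega), ?_⟩
    rw [hFc (2*j+4) (by omega), hFc (2*j+4+1) (by omega)]
    have e1 : j + (2*j + 4 - 2*j)/2 = j + 2 := by omega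
    have e2 : j + (2*j + 4 + 1 - 2*j)/2 = j + 2 := by omega
    rw [e1, e2, if_pos (by omega), if_neg (by omega)]
    exact Sym2.eq_swap

end Constructions2
lemma mod2 {k : ℕ} (hk : 0 < k) {n : ℕ} (h : n < 2*k) :
    n % k = if n < k then n else n - k := by
  split_ifs with h'
  · exact Nat.mod_eq_of_lt h'
  · rw [Nat.mod_eq_sub_mod (by omega), Nat.mod_eq_of_lt (by omega)]

end HamAux

/-- If `G` is a finite simple Hamiltonian graph on an odd number `k` of
vertices that is not (isomorphic to) the cycle `C_k`, then `G □ K₂` is not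
Hamiltonian-transitive. -/
theorem boxProd_K2_not_hamTransitive_of_odd_noncycle
    {V : Type*} [Fintype V] [DecidableEq V] (G : SimpleGraph V) (hG : HasHamCycle G)
    (hodd : Odd (Fintype.card V))
    (hnc : ¬ Nonempty (G ≃g cycleGraph (Fintype.card V))) :
    ¬ IsHamTransitive (G □ completeGraph (Fin 2)) := by
  rintro ⟨-, htrans⟩
  classical
  obtain ⟨a, c, hc⟩ := hG
  set k := Fintype.card V with hkdef
  have hlen : c.length = k := hc.length_eq
  have hk3 : 3 ≤ k := by
    have := hc.isCycle.three_le_length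
    omega
  have hkodd : k % 2 = 1 := by
    obtain ⟨r, hr⟩ := hodd
    omega
  obtain ⟨hvinj, hvsurj, hvcl, hvadjm⟩ := HamAux.ham_facts hc
  rcases HamAux.chord_or_iso hc with ⟨x, y, hxy, hnotc⟩ | hiso
  swap
  · exact hnc hiso
  obtain ⟨ia, hia, hxa⟩ := hvsurj x
  obtain ⟨ib, hib, hyb⟩ := hvsurj y
  have hiaib : ia ≠ ib := by
    rintro rfl
    rw [hxa] at hyb
    exact G.irrefl (hyb ▸ hxy)
  set d := (ib + k - ia) % k with hd
  have hdval : d = if ib + k - ia < k then ib + k - ia else ib + k - ia - k :=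
    HamAux.mod2 (by omega) (by omega)
  have hd0 : d ≠ 0 := by
    rw [hdval]
    split_ifs <;> omega
  have hdk : d < k := by
    rw [hdval]
    split_ifs <;> omega
  have hd1 : d ≠ 1 := by
    intro h1
    have hib' : ib = (ia + 1) % k := by
      rw [HamAux.mod2 (show 0 < k by omega) (show ia + 1 < 2*k by omega)]
      rw [hdval] at h1
      split_ifs at h1 ⊢ <;> omega
    refine hnotc ia hia ?_
    rw [hxa, ← hib', hyb]
  have hdk1 : d ≠ k - 1 := by
    intro h1
    have hia' : ia = (ib + 1) % k := by
      rw [HamAux.mod2 (show 0 < k by omega) (show ib + 1 < 2*k by omega)]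
      rw [hdval] at h1
      split_ifs at h1 ⊢ <;> omega
    refine hnotc ib hib ?_
    rw [← hia', hxa, hyb]
    exact Sym2.eq_swap
  set t := if d % 2 = 0 then 1 else k - 1 with ht
  set j := if d % 2 = 0 then d else k - d with hj
  have htor : t = 1 ∨ t = k - 1 := by
    rw [ht]; split_ifs <;> simp
  have hj2 : 2 ≤ j := by
    rw [hj]; split_ifs <;> omega
  have hjeven : j % 2 = 0 := by
    rw [hj]; split_ifs with h <;> omega
  have hjk : j + 3 ≤ k := by
    rw [hj]; split_ifs with h <;> omega
  obtain ⟨hwadj, hwinj, hwsurj, hwcl⟩ :=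
    HamAux.wshift_facts k c.getVert ia t hk3 hia htor hvinj hvsurj hvcl hvadjm
  set w : ℕ → V := fun i => c.getVert ((ia + t*i) % k) with hw
  -- the chord in terms of w
  have hmodeq : (ia + d) % k = ib := by
    have h1 : (ia + d) % k = (ia + (ib + k - ia)) % k := by
      conv_lhs => rw [hd]
      rw [Nat.add_mod, Nat.mod_mod_of_dvd]
      · rw [← Nat.add_mod]
      · exact dvd_refl k
    rw [h1, show ia + (ib + k - ia) = ib + k by omega, Nat.add_mod_right,
      Nat.mod_eq_of_lt hib]
  have hw0x : w 0 = x := by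
    simp only [hw, Nat.mul_zero, Nat.add_zero]
    rw [Nat.mod_eq_of_lt hia, hxa]
  have hwjy : w j = y := by
    have hgoal : (ia + t*j) % k = ib := by
      rcases eq_or_ne (d % 2) 0 with h | h
      · rw [ht, hj, if_pos h, if_pos h, Nat.one_mul]
        exact hmodeq
      · rw [ht, hj, if_neg h, if_neg h]
        have hcast : (((ia + (k-1)*(k-d)) : ℕ) : ZMod k) = ((ib : ℕ) : ZMod k) := by
          push_cast
          rw [Nat.cast_sub (show 1 ≤ k by omega), Nat.cast_sub (show d ≤ k by omega)]
          push_cast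
          rw [ZMod.natCast_self]
          have hr : ((ia : ZMod k)) + (0 - 1) * (0 - (d : ZMod k)) = (ia : ZMod k) + d := by
            ring
          rw [hr]
          have h2 : (((ia + d) : ℕ) : ZMod k) = ((ib : ℕ) : ZMod k) := by
            rw [ZMod.natCast_eq_natCast_iff']
            rw [hmodeq, Nat.mod_eq_of_lt hib]
          push_cast at h2
          exact h2
        rw [ZMod.natCast_eq_natCast_iff'] at hcast
        rwa [Nat.mod_eq_of_lt hib] at hcast
    simp only [hw]
    rw [hgoal, hyb]
  have hwchord : G.Adj (w 0) (w j) := by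
    rw [hw0x, hwjy]; exact hxy
  obtain ⟨z1, c₁, hc₁, hclass1, hE1mem, hE2mem⟩ :=
    HamAux.buildC1 (G := G) k w hk3 hwadj hwinj hwsurj
  obtain ⟨z2, c₂, hc₂, hX⟩ :=
    HamAux.buildC2 (G := G) k j w hk3 hj2 hjk hjeven hkodd hwadj hwinj hwsurj hwcl hwchord
  obtain ⟨φ, himg⟩ := htrans c₁ c₂ hc₁ hc₂
  have hreach : ∀ x' y' : V, G.Reachable x' y' := by
    intro x' y'
    have hx' := hc.mem_support x'
    have hy' := hc.mem_support y'
    exact ((c.takeUntil x' hx').reachable.symm.trans (c.takeUntil y' hy').reachable)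
  have hfst' : ∀ p q : V × Fin 2, (G □ completeGraph (Fin 2)).Adj p q →
      (φ p).1 = (φ q).1 → p.1 = q.1 := by
    intro p q hpq h
    have h2 := HamAux.phi_fst_eq φ.symm hodd hreach (φ p) (φ q) (φ.map_rel_iff.mpr hpq) h
    rwa [φ.symm_apply_apply, φ.symm_apply_apply] at h2
  -- each listed vertical of c₂ is the φ-image of a vertical of c₁
  have hkey : ∀ r, j - 1 ≤ r → r ≤ j + 2 →
      s((w r, (0:Fin 2)), (w r, 1)) = Sym2.map ⇑φ (s((w (k-1), (0:Fin 2)), (w (k-1), 1))) ∨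
      s((w r, (0:Fin 2)), (w r, 1)) = Sym2.map ⇑φ (s((w 0, (1:Fin 2)), (w 0, 0))) := by
    intro r hr1 hr2
    have hmem : s((w r, (0:Fin 2)), (w r, 1)) ∈ {e | e ∈ c₂.edges} := hX r hr1 hr2
    rw [← himg] at hmem
    obtain ⟨e₁, he₁, heq⟩ := hmem
    have he₁' : e₁ ∈ c₁.edges := he₁
    induction e₁ using Sym2.ind with
    | _ p q =>
      rw [Sym2.map_pair_eq] at heq
      have hadj0 : (G □ completeGraph (Fin 2)).Adj p q :=
        (SimpleGraph.mem_edgeSet _).mp (Walk.edges_subset_edgeSet c₁ he₁')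
      have hfsteq : (φ p).1 = (φ q).1 := by
        rcases Sym2.eq_iff.mp heq with ⟨h1, h2⟩ | ⟨h1, h2⟩ <;> rw [h1, h2]
      have hpq1 : p.1 = q.1 := hfst' p q hadj0 hfsteq
      have hdiag : (Sym2.map Prod.fst s(p, q)).IsDiag := by
        rw [Sym2.map_pair_eq, Sym2.mk_isDiag_iff]
        exact hpq1
      rcases hclass1 s(p,q) he₁' hdiag with h | h
      · left
        rw [← heq, ← h, Sym2.map_pair_eq]
      · right
        rw [← heq, ← h, Sym2.map_pair_eq]
  -- pairwise distinctness of the three verticals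
  have hdist : ∀ r r', j - 1 ≤ r → r ≤ j + 2 → j - 1 ≤ r' → r' ≤ j + 2 → r ≠ r' →
      s((w r, (0:Fin 2)), (w r, 1)) ≠ s((w r', (0:Fin 2)), (w r', 1)) := by
    intro r r' hr1 hr2 hr1' hr2' hne hEq
    rcases Sym2.eq_iff.mp hEq with ⟨h1, _⟩ | ⟨h1, _⟩
    · have := hwinj r (by omega) r' (by omega) (congrArg Prod.fst h1)
      exact hne this
    · simpa using congrArg Prod.snd h1
  have h1 := hkey (j-1) (by omega) (by omega)
  have h2 := hkey j (by omega) (by omega)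
  have h3 := hkey (j+1) (by omega) (by omega)
  have d12 := hdist (j-1) j (by omega) (by omega) (by omega) (by omega) (by omega)
  have d13 := hdist (j-1) (j+1) (by omega) (by omega) (by omega) (by omega) (by omega)
  have d23 := hdist j (j+1) (by omega) (by omega) (by omega) (by omega) (by omega)
  rcases h1 with h1 | h1 <;> rcases h2 with h2 | h2 <;> rcases h3 with h3 | h3 <;>
    first
      | exact d12 (h1.trans h2.symm)
      | exact d13 (h1.trans h3.symm)
      | exact d23 (h2.trans h3.symm)
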